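/- Let b ≥ 4 and let n be a natural number whose base-b digit sum m satisfies m ≥ b². Then some single partition-and-sum step takes n to a number of the form c·b^t + d·b + e with c ∈ {1,2}, digits d, e < b, and d·b + e ≤ b² − 2b (in particular, the base-b representation of the result is c followed by zeros followed by the two digits d, e). -/

import Mathlib

/-- `PartSum b n m` : `m` is obtained from `n` by splitting the base-`b` digit string of
`n` into consecutive nonempty blocks and summing the base-`b` values of the blocks. -/
def PartSum (b n m : ℕ) : Prop :=
  ∃ L : List (List ℕ), (∀ l ∈ L, l ≠ []) ∧ L.flatten = Nat.digits b n ∧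
    m = (L.map (fun l => Nat.ofDigits b l)).sum

def Reach (b : ℕ) (D : List ℕ) (m : ℕ) : Prop :=
  ∃ L : List (List ℕ), (∀ l ∈ L, l ≠ []) ∧ L.flatten = D ∧
    m = (L.map (fun l => Nat.ofDigits b l)).sum

lemma reach_nil (b : ℕ) : Reach b [] 0 := ⟨[], by simp, by simp, by simp⟩

lemma reach_cons1 {b m : ℕ} {D : List ℕ} (x : ℕ) (h : Reach b D m) :
    Reach b (x :: D) (x + m) := by
  obtain ⟨L, h1, h2, h3⟩ := h
  refine ⟨[x] :: L, ?_, by simp [h2], ?_⟩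
  · intro l hl; rcases List.mem_cons.mp hl with rfl | hl
    · simp
    · exact h1 l hl
  · simp [h3, Nat.ofDigits]

lemma reach_cons2 {b m : ℕ} {D : List ℕ} (x y : ℕ) (h : Reach b D m) :
    Reach b (x :: y :: D) (x + b * y + m) := by
  obtain ⟨L, h1, h2, h3⟩ := h
  refine ⟨[x, y] :: L, ?_, by simp [h2], ?_⟩
  · intro l hl; rcases List.mem_cons.mp hl with rfl | hl
    · simp
    · exact h1 l hl
  · simp [h3, Nat.ofDigits]; try ring

lemma reach_sum (b : ℕ) : ∀ D : List ℕ, Reach b D D.sum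
  | [] => reach_nil b
  | x :: D => by simpa using reach_cons1 x (reach_sum b D)

def pairMax (b : ℕ) : List ℕ → ℕ
  | [] => 0
  | [x] => x
  | x :: y :: D => x + b * y + pairMax b D

lemma sum_le_pairMax (b : ℕ) (hb : 1 ≤ b) : ∀ D : List ℕ, D.sum ≤ pairMax b D
  | [] => by simp [pairMax]
  | [x] => by simp [pairMax]
  | x :: y :: D => by
    have h := sum_le_pairMax b hb D
    simp only [pairMax, List.sum_cons]
    nlinarith

lemma pairMax_pair (b : ℕ) : ∀ (T : List ℕ) (x : ℕ),
    x + (b + 1) * T.sum ≤ pairMax b (x :: T) + pairMax b T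
  | [], x => by simp [pairMax]
  | y :: T, x => by
    have h := pairMax_pair b T y
    simp only [pairMax, List.sum_cons]
    nlinarith

lemma reach_interval (b : ℕ) (hb : 4 ≤ b) :
    ∀ D : List ℕ, (∀ z ∈ D, z < b) → ∀ K, D.sum ≤ K → K ≤ pairMax b D →
      ∃ m, Reach b D m ∧ K ≤ m ∧ m ≤ K + (b ^ 2 - 2 * b)
  | [], _, K, h1, h2 => by
    refine ⟨0, reach_nil b, ?_, ?_⟩ <;> simp [pairMax] at h2 <;> omega
  | [x], _, K, h1, h2 => by
    have hr : Reach b [x] x := by simpa using reach_cons1 x (reach_nil b)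
    simp only [pairMax, List.sum_cons, List.sum_nil, add_zero] at h1 h2
    exact ⟨x, hr, h2, by omega⟩
  | x :: y :: D, hd, K, h1, h2 => by
    have hdD : ∀ z ∈ D, z < b := fun z hz => hd z (by simp [hz])
    have hy : y + 1 ≤ b := hd y (by simp)
    have hsum : (x :: y :: D).sum = x + y + D.sum := by simp; ring
    have hpm : pairMax b (x :: y :: D) = x + b * y + pairMax b D := rfl
    have hsp : D.sum ≤ pairMax b D := sum_le_pairMax b (by omega) D
    have hE : 2 * b ≤ b ^ 2 := by nlinarith
    by_cases hc1 : K ≤ x + y + pairMax b D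
    · obtain ⟨m', hr, hm1, hm2⟩ := reach_interval b hb D hdD (K - (x + y)) (by omega) (by omega)
      refine ⟨x + (y + m'), reach_cons1 x (reach_cons1 y hr), by omega, by omega⟩
    · by_cases hc2 : K ≤ x + b * y + D.sum
      · refine ⟨x + b * y + D.sum, reach_cons2 x y (reach_sum b D), by omega, ?_⟩
        have key : b * y + 2 * b ≤ y + b ^ 2 + 1 := by nlinarith
        omega
      · obtain ⟨m', hr, hm1, hm2⟩ :=
          reach_interval b hb D hdD (K - (x + b * y)) (by omega) (by omega)
        exact ⟨x + b * y + m', reach_cons2 x y hr, by omega, by omega⟩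

theorem stmt_10 (b n : ℕ) (hb : 4 ≤ b) (hm : b ^ 2 ≤ (Nat.digits b n).sum) :
    ∃ m c t d e : ℕ, PartSum b n m ∧ m = c * b ^ t + d * b + e ∧
      (c = 1 ∨ c = 2) ∧ 2 ≤ t ∧ d < b ∧ e < b ∧ d * b + e ≤ b ^ 2 - 2 * b := by
  have hb1 : 1 < b := by omega
  rcases hDx : Nat.digits b n with _ | ⟨d0, D'⟩
  · rw [hDx] at hm; simp at hm; nlinarith
  rw [hDx] at hm
  set S := (d0 :: D').sum with hSdef
  have hdig : ∀ z ∈ d0 :: D', z < b := by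
    rw [← hDx]; exact fun z hz => Nat.digits_lt_base (by omega) hz
  have hS : b ^ 2 ≤ S := hm
  have hS0 : S ≠ 0 := by nlinarith
  set t := Nat.log b S with htdef
  have ht1 : b ^ t ≤ S := Nat.pow_log_le_self b hS0
  have ht2 : S < b ^ (t + 1) := Nat.lt_pow_succ_log_self hb1 S
  have ht : 2 ≤ t := (Nat.le_log_iff_pow_le hb1 hS0).mpr hS
  obtain ⟨c, t', hc, ht', hLS, hLb⟩ :
      ∃ c t', (c = 1 ∨ c = 2) ∧ 2 ≤ t' ∧ S ≤ c * b ^ t' ∧ 2 * (c * b ^ t') ≤ b * S := by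
    by_cases hcase : S ≤ 2 * b ^ t
    · refine ⟨2, t, Or.inr rfl, ht, hcase, ?_⟩
      calc 2 * (2 * b ^ t) = 4 * b ^ t := by ring
        _ ≤ b * b ^ t := Nat.mul_le_mul_right _ hb
        _ ≤ b * S := Nat.mul_le_mul_left _ ht1
    · refine ⟨1, t + 1, Or.inl rfl, by omega, by omega, ?_⟩
      have hbt : b ^ (t + 1) = b * b ^ t := by ring
      rw [hbt]
      calc 2 * (1 * (b * b ^ t)) = b * (2 * b ^ t) := by ring
        _ ≤ b * S := Nat.mul_le_mul_left _ (by omega)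
  set Lv := c * b ^ t' with hLv
  have hd0 : d0 + 1 ≤ b := hdig d0 (by simp)
  have hsum : S = d0 + D'.sum := by simp [hSdef]
  have hpp : d0 + (b + 1) * D'.sum ≤ pairMax b (d0 :: D') + pairMax b D' := pairMax_pair b D' d0
  have key : Lv ≤ pairMax b (d0 :: D') ∨ Lv ≤ d0 + pairMax b D' := by
    by_contra hcon
    push_neg at hcon
    have h1 : pairMax b (d0 :: D') + (d0 + pairMax b D') < 2 * Lv := by omega
    have h2 : b * S ≤ 2 * d0 + (b + 1) * D'.sum := by nlinarith
    omega
  have hmain : ∃ m, Reach b (d0 :: D') m ∧ Lv ≤ m ∧ m ≤ Lv + (b ^ 2 - 2 * b) := by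
    rcases key with hk | hk
    · exact reach_interval b hb (d0 :: D') hdig Lv (by omega) hk
    · have hdD : ∀ z ∈ D', z < b := fun z hz => hdig z (by simp [hz])
      obtain ⟨m', hr, hm1, hm2⟩ := reach_interval b hb D' hdD (Lv - d0) (by omega) (by omega)
      exact ⟨d0 + m', reach_cons1 d0 hr, by omega, by omega⟩
  obtain ⟨m, hr, hm1, hm2⟩ := hmain
  have hps : PartSum b n m := by
    show Reach b (Nat.digits b n) m
    rw [hDx]; exact hr
  set r := m - Lv with hr2
  have hE : 2 * b ≤ b ^ 2 := by nlinarith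
  have hrE : r ≤ b ^ 2 - 2 * b := by omega
  have hrb2 : r < b * b := by
    have hbb : b * b = b ^ 2 := (sq b).symm
    have hrlt : r < b ^ 2 := by omega
    omega
  refine ⟨m, c, t', r / b, r % b, hps, ?_, hc, ht', ?_, Nat.mod_lt _ (by omega), ?_⟩
  · have hdm : r / b * b + r % b = r := by
      rw [Nat.mul_comm]; exact Nat.div_add_mod r b
    omega
  · exact (Nat.div_lt_iff_lt_mul (by omega)).mpr hrb2
  · have hdm : r / b * b + r % b = r := by
      rw [Nat.mul_comm]; exact Nat.div_add_mod r b
    omega
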